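/- Let π_{11}, π_{12}, π_{21}, π_{22} ∈ (0,1] satisfy (1 − π_{11})(1 − π_{22}) > (1 − π_{12})(1 − π_{21}). Then there exist ᾱ_1, ᾱ_2, β̄_1, β̄_2 ∈ [0,1] such that 1 − π_{11} > (1 − ᾱ_1)(1 − β̄_1), 1 − π_{12} = (1 − ᾱ_1)(1 − β̄_2), 1 − π_{21} = (1 − ᾱ_2)(1 − β̄_1), and 1 − π_{22} > (1 − ᾱ_2)(1 − β̄_2). Conversely, the existence of such ᾱ_i, β̄_j implies (1 − π_{11})(1 − π_{22}) > (1 − π_{12})(1 − π_{21}). -/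

import Mathlib

set_option maxHeartbeats 1000000 in
/-- 2×2 Bernoulli case: `(1-π₁₁)(1-π₂₂) > (1-π₁₂)(1-π₂₁)` iff there are
`ᾱ₁, ᾱ₂, β̄₁, β̄₂ ∈ [0,1]` with `1-π₁₁ > (1-ᾱ₁)(1-β̄₁)`, `1-π₁₂ = (1-ᾱ₁)(1-β̄₂)`,
`1-π₂₁ = (1-ᾱ₂)(1-β̄₁)`, and `1-π₂₂ > (1-ᾱ₂)(1-β̄₂)`. -/
theorem bernoulli_two_by_two_strict
    (p11 p12 p21 p22 : ℝ)
    (h11 : p11 ∈ Set.Ioc (0 : ℝ) 1) (h12 : p12 ∈ Set.Ioc (0 : ℝ) 1)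
    (h21 : p21 ∈ Set.Ioc (0 : ℝ) 1) (h22 : p22 ∈ Set.Ioc (0 : ℝ) 1) :
    ((1 - p11) * (1 - p22) > (1 - p12) * (1 - p21)) ↔
      ∃ a1 a2 b1 b2 : ℝ,
        a1 ∈ Set.Icc (0 : ℝ) 1 ∧ a2 ∈ Set.Icc (0 : ℝ) 1 ∧
        b1 ∈ Set.Icc (0 : ℝ) 1 ∧ b2 ∈ Set.Icc (0 : ℝ) 1 ∧
        1 - p11 > (1 - a1) * (1 - b1) ∧ 1 - p12 = (1 - a1) * (1 - b2) ∧
        1 - p21 = (1 - a2) * (1 - b1) ∧ 1 - p22 > (1 - a2) * (1 - b2) := by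
  obtain ⟨h11a, h11b⟩ := h11
  obtain ⟨h12a, h12b⟩ := h12
  obtain ⟨h21a, h21b⟩ := h21
  obtain ⟨h22a, h22b⟩ := h22
  constructor
  · intro h
    have hq1221 : (0:ℝ) ≤ (1 - p12) * (1 - p21) := by nlinarith
    have hprod : (0:ℝ) < (1 - p11) * (1 - p22) := lt_of_le_of_lt hq1221 h
    have hq11 : (0:ℝ) < 1 - p11 := by nlinarith
    have hq22 : (0:ℝ) < 1 - p22 := by nlinarith
    by_cases h0 : p12 = 1
    · -- q12 = 0 : take a1 = 1, b2 = 1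
      exact ⟨1, p21, 0, 1, ⟨zero_le_one, le_refl 1⟩, ⟨le_of_lt h21a, h21b⟩,
        ⟨le_refl 0, zero_le_one⟩, ⟨zero_le_one, le_refl 1⟩,
        by nlinarith, by rw [h0]; ring, by ring, by nlinarith⟩
    · have hq12 : (0:ℝ) < 1 - p12 :=
        lt_of_le_of_ne (by linarith) (fun hc => h0 (by linarith))
      by_cases hc1 : 1 - p12 < 1 - p11 ∧ 1 - p21 < 1 - p22
      · exact ⟨p12, p21, 0, 0, ⟨le_of_lt h12a, h12b⟩, ⟨le_of_lt h21a, h21b⟩,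
          ⟨le_refl 0, zero_le_one⟩, ⟨le_refl 0, zero_le_one⟩,
          by nlinarith [hc1.1], by ring, by ring, by nlinarith [hc1.2]⟩
      · -- main case: pick r strictly between (1-p21)/(1-p22) and (1-p11)/(1-p12)
        set r : ℝ := ((1 - p21) / (1 - p22) + (1 - p11) / (1 - p12)) / 2 with hr
        have hlt : (1 - p21) / (1 - p22) < (1 - p11) / (1 - p12) := by
          rw [div_lt_div_iff₀ hq22 hq12]; nlinarith
        have hr1 : (1 - p21) / (1 - p22) < r := by rw [hr]; linarith
        have hr2 : r < (1 - p11) / (1 - p12) := by rw [hr]; linarith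
        have hge : (1 - p21) ≤ (1 - p21) / (1 - p22) := by
          rw [le_div_iff₀ hq22]; nlinarith
        have hrpos : 0 < r :=
          lt_of_le_of_lt (div_nonneg (by linarith) (by linarith)) hr1
        have hkey1 : 1 - p21 < (1 - p22) * r := by
          have := (div_lt_iff₀ hq22).mp hr1; linarith
        have hkey2 : (1 - p12) * r < 1 - p11 := by
          have := (lt_div_iff₀ hq12).mp hr2; linarith
        have hrq21 : 1 - p21 ≤ r := le_of_lt (lt_of_le_of_lt hge hr1)
        rcases not_and_or.mp hc1 with hA | hB
        · -- 1 - p11 ≤ 1 - p12, hence r < 1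
          have hA' : 1 - p11 ≤ 1 - p12 := le_of_not_gt hA
          have hrle1 : r ≤ 1 := by
            have : r < (1 - p11) / (1 - p12) := hr2
            have h1 : (1 - p11) / (1 - p12) ≤ 1 := by
              rw [div_le_one hq12]; linarith
            linarith
          refine ⟨p12, 1 - (1 - p21) / r, 1 - r, 0,
            ⟨le_of_lt h12a, h12b⟩, ⟨?_, ?_⟩, ⟨by linarith, by linarith⟩,
            ⟨le_refl 0, zero_le_one⟩, ?_, by ring, ?_, ?_⟩
          · have : (1 - p21) / r ≤ 1 := by rw [div_le_one hrpos]; exact hrq21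
            linarith
          · have : 0 ≤ (1 - p21) / r := div_nonneg (by linarith) (le_of_lt hrpos)
            linarith
          · have : (1 - p12) * r < 1 - p11 := hkey2
            calc (1 - p12) * (1 - (1 - r)) = (1 - p12) * r := by ring
              _ < 1 - p11 := hkey2
          · field_simp
            ring
          · have hx : (1 - (1 - (1 - p21) / r)) * (1 - (0:ℝ)) = (1 - p21) / r := by
              ring
            rw [hx, gt_iff_lt, div_lt_iff₀ hrpos]
            linarith [hkey1]
        · -- 1 - p22 ≤ 1 - p21, hence r > 1
          have hB' : 1 - p22 ≤ 1 - p21 := le_of_not_gt hB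
          have hrge1 : 1 ≤ r := by
            have h1 : (1:ℝ) ≤ (1 - p21) / (1 - p22) := by
              rw [le_div_iff₀ hq22]; linarith
            linarith
          have hrinv : 0 < 1 / r := by positivity
          have hrinvle : 1 / r ≤ 1 := by rw [div_le_one hrpos]; exact hrge1
          refine ⟨1 - (1 - p12) * r, p21, 0, 1 - 1 / r,
            ⟨?_, ?_⟩, ⟨le_of_lt h21a, h21b⟩, ⟨le_refl 0, zero_le_one⟩,
            ⟨by linarith, by linarith⟩, ?_, ?_, by ring, ?_⟩
          · nlinarith
          · have : 0 ≤ (1 - p12) * r := mul_nonneg (by linarith) (le_of_lt hrpos)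
            linarith
          · calc (1 - (1 - (1 - p12) * r)) * (1 - (0:ℝ)) = (1 - p12) * r := by ring
              _ < 1 - p11 := hkey2
          · have hx : (1 - (1 - (1 - p12) * r)) * (1 - (1 - 1 / r))
                = (1 - p12) * (r * (1 / r)) := by ring
            rw [hx, mul_one_div, div_self (ne_of_gt hrpos), mul_one]
          · have hx : (1 - p21) * (1 - (1 - 1 / r)) = (1 - p21) / r := by
              field_simp
              ring
            calc (1 - p21) * (1 - (1 - 1 / r)) = (1 - p21) / r := hx
              _ < 1 - p22 := by rw [div_lt_iff₀ hrpos]; nlinarith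
  · rintro ⟨a1, a2, b1, b2, ⟨ha1a, ha1b⟩, ⟨ha2a, ha2b⟩, ⟨hb1a, hb1b⟩, ⟨hb2a, hb2b⟩,
      e11, e12, e21, e22⟩
    have h1 : (0:ℝ) ≤ (1 - a1) * (1 - b1) := mul_nonneg (by linarith) (by linarith)
    have h2 : (0:ℝ) ≤ (1 - a2) * (1 - b2) := mul_nonneg (by linarith) (by linarith)
    have hB : (0:ℝ) < 1 - p22 := lt_of_le_of_lt h2 e22
    have step1 : (1 - a1) * (1 - b1) * ((1 - a2) * (1 - b2))
        ≤ (1 - a1) * (1 - b1) * (1 - p22) :=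
      mul_le_mul_of_nonneg_left (le_of_lt e22) h1
    have step2 : (1 - a1) * (1 - b1) * (1 - p22) < (1 - p11) * (1 - p22) :=
      mul_lt_mul_of_pos_right e11 hB
    have heq : (1 - p12) * (1 - p21)
        = (1 - a1) * (1 - b1) * ((1 - a2) * (1 - b2)) := by
      rw [e12, e21]; ring
    rw [gt_iff_lt, heq]
    exact lt_of_le_of_lt step1 step2
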